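/- Let d ≥ 1, A a symmetric d×d real matrix, and b ∈ ℝ^d satisfying the ε-condition: there exists ε ∈ {-1, 1}^d such that ε_i b_i ≤ 0 for all i and ε_i ε_j A_{ij} ≤ 0 for all i ≠ j. Let q(u) = ∑_{i,j} A_{ij} u_i u_j + ∑_i b_i u_i and φ(p) = inf {q(u) | u ∈ ℝ^d, u_i² = p_i for all i} (infimum +∞ over the empty set). Then for every p ∈ ℝ^d with p_i ≥ 0 for all i, φ(p) = ∑_i A_{ii} p_i − ∑_{i ≠ j} |A_{ij}| √(p_i p_j) − ∑_i |b_i| √(p_i). -/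

import Mathlib

/-- Under the ε-condition, the conditional infimum of a linear-quadratic
function with respect to the square mapping has a closed-form expression on the
nonnegative orthant. -/
theorem condInf_quadratic_closed_form (d : ℕ) (hd : 1 ≤ d)
    (A : Fin d → Fin d → ℝ) (hA : ∀ i j, A i j = A j i) (b : Fin d → ℝ)
    (hε : ∃ ε : Fin d → ℝ, (∀ i, ε i = 1 ∨ ε i = -1) ∧
      (∀ i, ε i * b i ≤ 0) ∧ (∀ i j, i ≠ j → ε i * ε j * A i j ≤ 0))
    (q : (Fin d → ℝ) → ℝ)
    (hq : ∀ u, q u = (∑ i, ∑ j, A i j * u i * u j) + ∑ i, b i * u i)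
    (φ : (Fin d → ℝ) → EReal)
    (hφ : ∀ p, φ p = sInf ((fun u => (q u : EReal)) '' {u | ∀ i, (u i) ^ 2 = p i})) :
    ∀ p : Fin d → ℝ, (∀ i, 0 ≤ p i) →
      φ p = (((∑ i, A i i * p i)
          - ∑ i, ∑ j, (if i = j then 0 else |A i j| * Real.sqrt (p i * p j))
          - ∑ i, |b i| * Real.sqrt (p i) : ℝ) : EReal) := by
  intro p hp
  obtain ⟨ε, hε1, hεb, hεA⟩ := hε
  have hεabs : ∀ i, |ε i| = 1 := by
    intro i; rcases hε1 i with h | h <;> simp [h]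
  have hεsq : ∀ i, ε i ^ 2 = 1 := by
    intro i; rcases hε1 i with h | h <;> simp [h]
  set c : ℝ := (∑ i, A i i * p i)
          - ∑ i, ∑ j, (if i = j then 0 else |A i j| * Real.sqrt (p i * p j))
          - ∑ i, |b i| * Real.sqrt (p i) with hc
  -- rewrite c as a single sum form
  have hcform : c = (∑ i, ∑ j, (if i = j then A i i * p i
        else -(|A i j| * Real.sqrt (p i * p j))))
      + ∑ i, -(|b i| * Real.sqrt (p i)) := by
    rw [hc]
    have h1 : ∀ i j : Fin d, (if i = j then A i i * p i
        else -(|A i j| * Real.sqrt (p i * p j)))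
        = (if i = j then A i i * p i else 0)
          - (if i = j then 0 else |A i j| * Real.sqrt (p i * p j)) := by
      intro i j; by_cases h : i = j <;> simp [h]
    rw [Finset.sum_congr rfl (fun i _ => Finset.sum_congr rfl (fun j _ => h1 i j))]
    rw [Finset.sum_congr rfl
      (fun i _ => Finset.sum_sub_distrib (s := Finset.univ) _ _), Finset.sum_sub_distrib]
    have h2 : ∀ i : Fin d, ∑ j, (if i = j then A i i * p i else 0) = A i i * p i := by
      intro i; simp
    rw [Finset.sum_congr rfl (fun i _ => h2 i)]
    simp [sub_eq_add_neg, Finset.sum_neg_distrib]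
  rw [hφ]
  apply le_antisymm
  · apply sInf_le
    refine ⟨fun i => ε i * Real.sqrt (p i), fun i => ?_, ?_⟩
    · have := Real.sq_sqrt (hp i)
      rw [mul_pow, hεsq i, one_mul]
      exact this
    · show ((q _ : ℝ) : EReal) = (c : EReal)
      norm_cast
      rw [hq, hcform]
      congr 1
      · refine Finset.sum_congr rfl (fun i _ => Finset.sum_congr rfl (fun j _ => ?_))
        by_cases h : i = j
        · subst h
          rw [if_pos rfl]
          have h2 : Real.sqrt (p i) ^ 2 = p i := Real.sq_sqrt (hp i)
          linear_combination A i i * ε i ^ 2 * h2 + A i i * p i * hεsq i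
        · rw [if_neg h]
          have hA' : ε i * ε j * A i j = -|A i j| := by
            have h1 : |ε i * ε j * A i j| = |A i j| := by
              rw [abs_mul, abs_mul, hεabs, hεabs, one_mul, one_mul]
            have h2 := abs_of_nonpos (hεA i j h)
            linarith [h1, h2]
          have hs : Real.sqrt (p i * p j) = Real.sqrt (p i) * Real.sqrt (p j) :=
            Real.sqrt_mul (hp i) _
          rw [hs]
          linear_combination Real.sqrt (p i) * Real.sqrt (p j) * hA'
      · refine Finset.sum_congr rfl (fun i _ => ?_)
        have hb' : ε i * b i = -|b i| := by
          have h1 : |ε i * b i| = |b i| := by rw [abs_mul, hεabs, one_mul]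
          have h2 := abs_of_nonpos (hεb i)
          linarith [h1, h2]
        linear_combination Real.sqrt (p i) * hb'
  · apply le_sInf
    rintro x ⟨u, hu, rfl⟩
    show (c : EReal) ≤ ((q u : ℝ) : EReal)
    rw [EReal.coe_le_coe_iff]
    rw [hq, hcform]
    have habs : ∀ i, Real.sqrt (p i) = |u i| := by
      intro i; rw [← hu i, Real.sqrt_sq_eq_abs]
    apply add_le_add
    · refine Finset.sum_le_sum (fun i _ => Finset.sum_le_sum (fun j _ => ?_))
      by_cases h : i = j
      · subst h
        rw [if_pos rfl, ← hu i]
        exact le_of_eq (by ring)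
      · rw [if_neg h]
        have hs : Real.sqrt (p i * p j) = |u i| * |u j| := by
          rw [Real.sqrt_mul (hp i), habs, habs]
        rw [hs]
        calc -(|A i j| * (|u i| * |u j|)) = -|A i j * u i * u j| := by
              rw [abs_mul, abs_mul]; ring
          _ ≤ A i j * u i * u j := neg_abs_le _
    · refine Finset.sum_le_sum (fun i _ => ?_)
      rw [habs]
      calc -(|b i| * |u i|) = -|b i * u i| := by rw [abs_mul]
        _ ≤ b i * u i := neg_abs_le _
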